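/- arXiv:2505.09975 — 2 statements merged into one kernel-verified Lean document; each statement's English description precedes it below -/
import Mathlib

section
/- Let θ be a nonzero element of the formal power series ring Z_p[[X₁, X₂]]. Then there exist positive integers k₁ > k₂ > 3 with k₁ ≡ a (mod p−1) and k₂ ≡ b (mod p−1) (for any prescribed residues a, b) such that θ does not lie in the kernel of the evaluation homomorphism sending X₁ to (1+p)^{k₁} − 1 and X₂ to (1+p)^{k₂} − 1. -/
/-- Evaluation of a two-variable power series over `ℤ_[p]` at the point
`(X₁, X₂) = ((1+p)^k₁ - 1, (1+p)^k₂ - 1)`, given as the (convergent) sum over all monomials. -/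
noncomputable def padicWeightEval (p : ℕ) [Fact p.Prime] (k₁ k₂ : ℕ)
    (θ : MvPowerSeries (Fin 2) ℤ_[p]) : ℤ_[p] :=
  ∑' d : Fin 2 →₀ ℕ,
    (MvPowerSeries.coeff d θ) *
      ((1 + (p : ℤ_[p])) ^ k₁ - 1) ^ (d 0) * ((1 + (p : ℤ_[p])) ^ k₂ - 1) ^ (d 1)

open Filter Topology Finset

section Aux

variable {p : ℕ} [Fact p.Prime]

lemma PA.summable_pow (f : ℕ → ℤ_[p]) {x : ℤ_[p]} (hx : ‖x‖ < 1) :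
    Summable (fun i => f i * x ^ i) := by
  apply Summable.of_norm_bounded (g := fun i => ‖x‖ ^ i)
    (summable_geometric_of_lt_one (norm_nonneg x) hx)
  intro i
  rw [norm_mul, norm_pow]
  exact mul_le_of_le_one_left (by positivity) (PadicInt.norm_le_one _)

lemma PA.summable_two (A : ℕ × ℕ → ℤ_[p]) {x y : ℤ_[p]} (hx : ‖x‖ < 1) (hy : ‖y‖ < 1) :
    Summable (fun nm : ℕ × ℕ => A nm * x ^ nm.1 * y ^ nm.2) := by
  apply Summable.of_norm_bounded (g := fun nm : ℕ × ℕ => ‖x‖ ^ nm.1 * ‖y‖ ^ nm.2)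
  · exact Summable.mul_of_nonneg (summable_geometric_of_lt_one (norm_nonneg x) hx)
      (summable_geometric_of_lt_one (norm_nonneg y) hy)
      (fun i => by positivity) (fun i => by positivity)
  · intro nm
    rw [norm_mul, norm_mul, norm_pow, norm_pow]
    have h1 := PadicInt.norm_le_one (A nm)
    have h2 : (0:ℝ) ≤ ‖x‖ ^ nm.1 := by positivity
    have h3 : (0:ℝ) ≤ ‖y‖ ^ nm.2 := by positivity
    exact mul_le_mul_of_nonneg_right (mul_le_of_le_one_left h2 h1) h3

/-- If a one-variable power series over `ℤ_[p]` (with the tsum-evaluation) vanishes at a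
sequence of nonzero points whose norms tend to `0`, then all its coefficients vanish. -/
lemma PA.one_var_zero (x : ℕ → ℤ_[p]) (hx0 : ∀ n, x n ≠ 0) (hx1 : ∀ n, ‖x n‖ < 1)
    (hxlim : Tendsto (fun n => ‖x n‖) atTop (𝓝 0))
    (f : ℕ → ℤ_[p]) (hf : ∀ n, ∑' i, f i * x n ^ i = 0) : ∀ i, f i = 0 := by
  have step : ∀ (g : ℕ → ℤ_[p]), (∀ n, ∑' i, g i * x n ^ i = 0) →
      g 0 = 0 ∧ ∀ n, ∑' i, g (i + 1) * x n ^ i = 0 := by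
    intro g hg
    have key : ∀ n, g 0 + x n * ∑' i, g (i + 1) * x n ^ i = 0 := by
      intro n
      have hs := PA.summable_pow g (hx1 n)
      have h1 := hs.tsum_eq_zero_add
      rw [hg n] at h1
      have hs' : Summable (fun i => g (i + 1) * x n ^ i) := PA.summable_pow _ (hx1 n)
      have h2 : ∑' i, g (i + 1) * x n ^ (i + 1) = x n * ∑' i, g (i + 1) * x n ^ i := by
        rw [← hs'.tsum_mul_left]
        exact tsum_congr fun i => by ring
      rw [h2, pow_zero, mul_one] at h1
      exact h1.symm
    have hg0 : g 0 = 0 := by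
      have hb : ∀ n, ‖g 0‖ ≤ ‖x n‖ := by
        intro n
        have h0 : g 0 = -(x n * ∑' i, g (i + 1) * x n ^ i) :=
          eq_neg_of_add_eq_zero_left (key n)
        rw [h0, norm_neg, norm_mul]
        exact mul_le_of_le_one_right (norm_nonneg _) (PadicInt.norm_le_one _)
      have hle : ‖g 0‖ ≤ 0 := ge_of_tendsto' hxlim hb
      simpa using le_antisymm hle (norm_nonneg _)
    refine ⟨hg0, fun n => ?_⟩
    have h := key n
    rw [hg0, zero_add] at h
    rcases mul_eq_zero.1 h with h' | h'
    · exact absurd h' (hx0 n)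
    · exact h'
  have main : ∀ k, ∀ n, ∑' i, f (i + k) * x n ^ i = 0 := by
    intro k
    induction k with
    | zero => simpa using hf
    | succ k ih =>
      intro n
      have h := (step (fun i => f (i + k)) ih).2 n
      have he : ∀ i : ℕ, i + 1 + k = i + (k + 1) := fun i => by omega
      simpa [he] using h
  intro i
  have h := (step (fun j => f (j + i)) (main i)).1
  simpa using h

lemma PB.norm_pow_sub_one_le (u : ℤ_[p]) (m : ℕ) : ‖u ^ m - 1‖ ≤ ‖u - 1‖ := by
  have h : u ^ m - 1 = (∑ i ∈ Finset.range m, u ^ i) * (u - 1) := (geom_sum_mul u m).symm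
  rw [h, norm_mul]
  exact mul_le_of_le_one_left (norm_nonneg _) (PadicInt.norm_le_one _)

lemma PB.step_norm {t : ℤ_[p]} {n : ℕ} (ht : ‖t‖ ≤ ((p:ℝ)⁻¹) ^ (n+1)) :
    ‖(1 + t) ^ p - 1‖ ≤ ((p:ℝ)⁻¹) ^ (n+2) := by
  have hp2 : 2 ≤ p := (Fact.out : p.Prime).two_le
  have hident : (1 + t) ^ p - 1 =
      (p:ℤ_[p]) * t + t^2 * ∑ k ∈ Finset.range (p-1), (p.choose (k+2) : ℤ_[p]) * t ^ k := by
    have hexp : (t + 1) ^ p = ∑ k ∈ Finset.range (p+1), t ^ k * (p.choose k : ℤ_[p]) := by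
      rw [add_pow]
      exact Finset.sum_congr rfl fun k _ => by rw [one_pow, mul_one]
    have hsplit : ∑ k ∈ Finset.range (p+1), t ^ k * (p.choose k : ℤ_[p]) =
        (∑ k ∈ Finset.range (p-1), t ^ (k+2) * (p.choose (k+2) : ℤ_[p]))
          + t * (p:ℤ_[p]) + 1 := by
      have h1 : p + 1 = (p - 1) + 1 + 1 := by omega
      rw [h1, Finset.sum_range_succ', Finset.sum_range_succ']
      have h2 : ∀ k, k + 1 + 1 = k + 2 := fun k => by omega
      simp [h2, Nat.choose_one_right]
    rw [add_comm (1:ℤ_[p]) t, hexp, hsplit]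
    have h3 : ∑ k ∈ Finset.range (p-1), t ^ (k+2) * (p.choose (k+2) : ℤ_[p])
        = t^2 * ∑ k ∈ Finset.range (p-1), (p.choose (k+2) : ℤ_[p]) * t ^ k := by
      rw [Finset.mul_sum]
      exact Finset.sum_congr rfl fun k _ => by ring
    rw [h3]; ring
  rw [hident]
  have hr0 : (0:ℝ) ≤ (p:ℝ)⁻¹ := by positivity
  have hr1 : ((p:ℝ)⁻¹) ≤ 1 := by
    rw [inv_le_one_iff₀]; right; exact_mod_cast Nat.one_le_of_lt hp2
  have hb1 : ‖(p:ℤ_[p]) * t‖ ≤ ((p:ℝ)⁻¹) ^ (n+2) := by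
    rw [norm_mul, PadicInt.norm_p, pow_succ']
    exact mul_le_mul_of_nonneg_left ht hr0
  have hb2 : ‖t^2 * ∑ k ∈ Finset.range (p-1), (p.choose (k+2) : ℤ_[p]) * t ^ k‖
      ≤ ((p:ℝ)⁻¹) ^ (n+2) := by
    rw [norm_mul, norm_pow]
    calc ‖t‖ ^ 2 * ‖∑ k ∈ Finset.range (p-1), (p.choose (k+2) : ℤ_[p]) * t ^ k‖
        ≤ ‖t‖ ^ 2 * 1 :=
          mul_le_mul_of_nonneg_left (PadicInt.norm_le_one _) (by positivity)
      _ = ‖t‖ ^ 2 := mul_one _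
      _ ≤ (((p:ℝ)⁻¹) ^ (n+1)) ^ 2 := pow_le_pow_left₀ (norm_nonneg t) ht 2
      _ = ((p:ℝ)⁻¹) ^ (2*(n+1)) := by rw [← pow_mul, mul_comm]
      _ ≤ ((p:ℝ)⁻¹) ^ (n+2) := pow_le_pow_of_le_one hr0 hr1 (by omega)
  exact le_trans (PadicInt.nonarchimedean _ _) (max_le hb1 hb2)

lemma PB.norm_base (n : ℕ) : ‖(1 + (p:ℤ_[p])) ^ (p ^ n) - 1‖ ≤ ((p:ℝ)⁻¹) ^ (n+1) := by
  induction n with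
  | zero => simpa [PadicInt.norm_p] using le_refl ((p:ℝ)⁻¹)
  | succ n ih =>
    have h : (1 + (p:ℤ_[p])) ^ (p ^ (n+1)) = ((1 + (p:ℤ_[p])) ^ (p ^ n)) ^ p := by
      rw [← pow_mul, pow_succ]
    rw [h]
    have := PB.step_norm (t := (1 + (p:ℤ_[p])) ^ (p ^ n) - 1) (n := n) ih
    simpa using this

lemma PB.e_norm_le (A n : ℕ) :
    ‖(1 + (p:ℤ_[p])) ^ (A * p ^ n) - 1‖ ≤ ((p:ℝ)⁻¹) ^ (n+1) := by
  rw [mul_comm, pow_mul]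
  exact (PB.norm_pow_sub_one_le _ A).trans (PB.norm_base n)

lemma PB.e_ne_zero (k : ℕ) (hk : 0 < k) : (1 + (p:ℤ_[p])) ^ k - 1 ≠ 0 := by
  have hp2 : 2 ≤ p := (Fact.out : p.Prime).two_le
  have hcast : (((1 + (p:ℤ)) ^ k - 1 : ℤ) : ℤ_[p]) = (1 + (p:ℤ_[p])) ^ k - 1 := by
    push_cast; ring
  have hpos : (1:ℤ) < (1 + (p:ℤ)) ^ k := by
    apply one_lt_pow₀
    · exact_mod_cast by omega
    · omega
  intro h
  rw [← hcast, Int.cast_eq_zero] at h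
  omega

lemma PB.residue (a c n : ℕ) (hp2 : 2 ≤ p) :
    ((a + (p-1)*c) * p ^ n) % (p-1) = a % (p-1) := by
  have h1 : p ≡ 1 [MOD p - 1] := by
    have hp' : p = (p-1) + 1 := by omega
    show p % (p-1) = 1 % (p-1)
    rw [hp']
    exact Nat.add_mod_left _ _
  have h2 : (a + (p-1)*c) * p ^ n ≡ (a + (p-1)*c) * 1 ^ n [MOD p-1] :=
    Nat.ModEq.mul_left _ (h1.pow n)
  have h3 : (a + (p-1)*c) * 1 ^ n = a + (p-1)*c := by ring
  have h4 : a + (p-1)*c ≡ a [MOD p-1] := by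
    simpa using Nat.ModEq.add_left a ((Nat.modEq_zero_iff_dvd).2 (dvd_mul_right (p-1) c))
  have h5 : (a + (p-1)*c) * p ^ n ≡ a + (p-1)*c [MOD p-1] := by
    simpa using h2
  exact h5.trans h4

lemma PB.e_tendsto (A : ℕ) :
    Tendsto (fun n => ‖(1 + (p:ℤ_[p])) ^ (A * p ^ n) - 1‖) atTop (𝓝 0) := by
  have hp2 : 2 ≤ p := (Fact.out : p.Prime).two_le
  have hr0 : (0:ℝ) ≤ (p:ℝ)⁻¹ := by positivity
  have hr1 : ((p:ℝ)⁻¹) < 1 := by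
    rw [inv_lt_one_iff₀]; right; exact_mod_cast hp2.trans_lt' one_lt_two
  have hg : Tendsto (fun n : ℕ => ((p:ℝ)⁻¹) ^ (n+1)) atTop (𝓝 0) :=
    (tendsto_pow_atTop_nhds_zero_of_lt_one hr0 hr1).comp (tendsto_add_atTop_nat 1)
  exact squeeze_zero (fun n => norm_nonneg _) (fun n => PB.e_norm_le A n) hg

lemma PB.e_norm_lt_one (A n : ℕ) : ‖(1 + (p:ℤ_[p])) ^ (A * p ^ n) - 1‖ < 1 := by
  have hp2 : 2 ≤ p := (Fact.out : p.Prime).two_le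
  have hr0 : (0:ℝ) ≤ (p:ℝ)⁻¹ := by positivity
  have hr1 : ((p:ℝ)⁻¹) < 1 := by
    rw [inv_lt_one_iff₀]; right; exact_mod_cast hp2.trans_lt' one_lt_two
  exact lt_of_le_of_lt (PB.e_norm_le A n) (pow_lt_one₀ hr0 hr1 (Nat.succ_ne_zero n))

/-- The equivalence between monomial exponents on two variables and pairs of naturals. -/
noncomputable def PCE : (Fin 2 →₀ ℕ) ≃ ℕ × ℕ :=
  Finsupp.equivFunOnFinite.trans (finTwoArrowEquiv ℕ)

lemma PCE_apply (d : Fin 2 →₀ ℕ) : PCE d = (d 0, d 1) := rfl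

/-- Coefficients of a two-variable power series, indexed by pairs of naturals. -/
noncomputable def PCA (θ : MvPowerSeries (Fin 2) ℤ_[p]) (n m : ℕ) : ℤ_[p] :=
  MvPowerSeries.coeff (PCE.symm (n, m)) θ

set_option maxHeartbeats 1000000 in
lemma PC.eval_repr (θ : MvPowerSeries (Fin 2) ℤ_[p]) (k₁ k₂ : ℕ)
    (hx : ‖(1 + (p:ℤ_[p])) ^ k₁ - 1‖ < 1) (hy : ‖(1 + (p:ℤ_[p])) ^ k₂ - 1‖ < 1) :
    padicWeightEval p k₁ k₂ θ =
      ∑' n : ℕ, (∑' m : ℕ, PCA θ n m * ((1 + (p:ℤ_[p])) ^ k₂ - 1) ^ m)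
        * ((1 + (p:ℤ_[p])) ^ k₁ - 1) ^ n := by
  set x := (1 + (p:ℤ_[p])) ^ k₁ - 1
  set y := (1 + (p:ℤ_[p])) ^ k₂ - 1
  have h1 : padicWeightEval p k₁ k₂ θ
      = ∑' nm : ℕ × ℕ, PCA θ nm.1 nm.2 * x ^ nm.1 * y ^ nm.2 := by
    rw [padicWeightEval]
    rw [← Equiv.tsum_eq PCE (fun nm : ℕ × ℕ => PCA θ nm.1 nm.2 * x ^ nm.1 * y ^ nm.2)]
    apply tsum_congr
    intro d
    show MvPowerSeries.coeff d θ * x ^ d 0 * y ^ d 1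
      = PCA θ (PCE d).1 (PCE d).2 * x ^ (PCE d).1 * y ^ (PCE d).2
    rw [PCE_apply]
    show _ = PCA θ (d 0) (d 1) * x ^ (d 0) * y ^ (d 1)
    rw [PCA, show ((d 0 : ℕ), (d 1 : ℕ)) = PCE d from rfl, Equiv.symm_apply_apply]
  have hsum : Summable (fun nm : ℕ × ℕ => PCA θ nm.1 nm.2 * x ^ nm.1 * y ^ nm.2) :=
    PA.summable_two (fun nm => PCA θ nm.1 nm.2) hx hy
  have hin : ∀ n, Summable (fun m => PCA θ n m * x ^ n * y ^ m) :=
    fun n => PA.summable_pow (fun m => PCA θ n m * x ^ n) hy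
  have h2 : ∑' nm : ℕ × ℕ, PCA θ nm.1 nm.2 * x ^ nm.1 * y ^ nm.2
      = ∑' (n : ℕ) (m : ℕ), PCA θ n m * x ^ n * y ^ m := hsum.tsum_prod' hin
  rw [h1, h2]
  apply tsum_congr
  intro n
  calc ∑' m, PCA θ n m * x ^ n * y ^ m
      = ∑' m, x ^ n * (PCA θ n m * y ^ m) := tsum_congr fun m => by ring
    _ = x ^ n * ∑' m, PCA θ n m * y ^ m :=
        (PA.summable_pow (fun m => PCA θ n m) hy).tsum_mul_left _
    _ = (∑' m, PCA θ n m * y ^ m) * x ^ n := mul_comm _ _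

end Aux

/-- Let `θ` be a nonzero element of `ℤ_p[[X₁, X₂]]`, and let `a, b` be prescribed residues
modulo `p - 1`.  Then there exist integers `k₁ > k₂ > 3` with `k₁ ≡ a` and `k₂ ≡ b (mod p-1)`
such that `θ` does not lie in the kernel of the evaluation homomorphism sending
`X₁ ↦ (1+p)^k₁ - 1` and `X₂ ↦ (1+p)^k₂ - 1`. -/
theorem exists_classical_point_not_in_kernel
    (p : ℕ) [Fact p.Prime] (hp : Odd p) (a b : ℕ)
    (θ : MvPowerSeries (Fin 2) ℤ_[p]) (hθ : θ ≠ 0) :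
    ∃ k₁ k₂ : ℕ, k₁ > k₂ ∧ k₂ > 3 ∧
      k₁ % (p - 1) = a % (p - 1) ∧ k₂ % (p - 1) = b % (p - 1) ∧
      padicWeightEval p k₁ k₂ θ ≠ 0 := by
  by_contra hcon
  push_neg at hcon
  have hp2 : 2 ≤ p := (Fact.out : p.Prime).two_le
  have hp3 : 3 ≤ p := by
    rcases hp with ⟨m, hm⟩
    omega
  apply hθ
  set B := b + (p - 1) * 4 with hB
  set y : ℕ → ℤ_[p] := fun m => (1 + (p:ℤ_[p])) ^ (B * p ^ m) - 1 with hy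
  have hBpos : 0 < B := by omega
  have hk2gt : ∀ m, B * p ^ m > 3 := by
    intro m
    have h1 : B ≤ B * p ^ m := Nat.le_mul_of_pos_right B (Nat.pow_pos (n := m) (by omega))
    omega
  have key1 : ∀ m i, (∑' j, PCA θ i j * y m ^ j) = 0 := by
    intro m
    set k₂ := B * p ^ m with hk2
    set C := a + (p - 1) * (k₂ + 1) with hC
    set x : ℕ → ℤ_[p] := fun n => (1 + (p:ℤ_[p])) ^ (C * p ^ n) - 1 with hx
    have hCk : ∀ n, C * p ^ n > k₂ := by
      intro n
      have h1 : 2 * (k₂ + 1) ≤ (p - 1) * (k₂ + 1) := Nat.mul_le_mul_right _ (by omega)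
      have h2 : C ≤ C * p ^ n := Nat.le_mul_of_pos_right C (Nat.pow_pos (n := n) (by omega))
      have h3 : k₂ < C := by omega
      exact lt_of_lt_of_le h3 h2
    have hx0 : ∀ n, x n ≠ 0 := fun n => PB.e_ne_zero _ (lt_of_le_of_lt (Nat.zero_le k₂) (hCk n))
    have hx1 : ∀ n, ‖x n‖ < 1 := fun n => PB.e_norm_lt_one C n
    apply PA.one_var_zero x hx0 hx1 (PB.e_tendsto C)
    intro n
    have h := hcon (C * p ^ n) k₂ (hCk n) (hk2gt m)
      (PB.residue a (k₂ + 1) n hp2) (PB.residue b 4 m hp2)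
    rw [PC.eval_repr θ _ _ (PB.e_norm_lt_one C n) (PB.e_norm_lt_one B m)] at h
    exact h
  have key2 : ∀ i j, PCA θ i j = 0 := by
    intro i
    have hy0 : ∀ m, y m ≠ 0 := fun m => PB.e_ne_zero _ (lt_trans (by norm_num) (hk2gt m))
    have hy1 : ∀ m, ‖y m‖ < 1 := fun m => PB.e_norm_lt_one B m
    exact PA.one_var_zero y hy0 hy1 (PB.e_tendsto B) (fun j => PCA θ i j)
      (fun m => key1 m i)
  apply MvPowerSeries.ext
  intro d
  have h := key2 (d 0) (d 1)
  rw [PCA, show ((d 0 : ℕ), (d 1 : ℕ)) = PCE d from rfl, Equiv.symm_apply_apply] at h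
  simpa using h
end

section
/- Let R be a reduced commutative ring with minimal primes η₁, …, η_t, and let A be the generalized matrix algebra consisting of 2×2 block matrices with diagonal blocks in M₂(R) and off-diagonal blocks in M₂(B) and M₂(C), where B, C are R-submodules of Frac(R) (on the total ring of fractions) with B·C ⊆ R. Suppose the trace function on A (restriction of the 4×4 matrix trace) is faithful, i.e. its kernel ideal is zero. If for some minimal prime η the image of C in Frac(R/η) is zero, then the image of B in Frac(R/η) is also zero. -/
/-- The underlying set of the generalized matrix algebra `(M₂(R) M₂(B); M₂(C) M₂(R))`
inside `M₄(K)`, where `K` is the total ring of fractions of `R` and `B, C` are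
`R`-submodules of `K`: block matrices whose two diagonal `2×2` blocks have entries
coming from `R`, whose top-right `2×2` block has entries in `B`, and whose bottom-left
`2×2` block has entries in `C`. -/
def gmaSet (R : Type*) [CommRing R] (K : Type*) [CommRing K] [Algebra R K]
    (B C : Submodule R K) : Set (Matrix (Fin 4) (Fin 4) K) :=
  { M | ∀ i j : Fin 4,
      (i.val < 2 → j.val < 2 → ∃ r : R, algebraMap R K r = M i j) ∧
      (2 ≤ i.val → 2 ≤ j.val → ∃ r : R, algebraMap R K r = M i j) ∧
      (i.val < 2 → 2 ≤ j.val → M i j ∈ B) ∧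
      (2 ≤ i.val → j.val < 2 → M i j ∈ C) }

-- pointwise annihilation
theorem aux_pointwise {R : Type*} [CommRing R] [IsReduced R] {η : Ideal R}
    (hη : η ∈ minimalPrimes R) {x : R} (hx : x ∈ η) :
    ∃ s ∉ η, s * x = 0 := by
  haveI : η.IsPrime := hη.1.1
  have hnil : IsNilpotent (algebraMap R (Localization η.primeCompl) x) := by
    have h2 := IsLocalization.AtPrime.radical_map_of_mem_minimalPrimes
      (A := Localization η.primeCompl) η ⊥ hη
    rw [Ideal.map_bot] at h2
    have hm : algebraMap R (Localization η.primeCompl) x ∈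
        η.map (algebraMap R (Localization η.primeCompl)) := Ideal.mem_map_of_mem _ hx
    rw [← h2] at hm
    obtain ⟨n, hn⟩ := hm
    exact ⟨n, by simpa using hn⟩
  obtain ⟨n, hn⟩ := hnil
  rw [← map_pow] at hn
  obtain ⟨s, hs⟩ := (IsLocalization.map_eq_zero_iff η.primeCompl _ _).mp hn
  refine ⟨(s : R), s.2, ?_⟩
  have : IsNilpotent ((s : R) * x) := by
    refine ⟨n + 1, ?_⟩
    calc ((s : R) * x) ^ (n + 1) = ((s : R) ^ n * x) * ((s : R) * x ^ n) := by ring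
    _ = 0 := by rw [hs, mul_zero]
  simpa using this.eq_zero

theorem aux_uniform {R : Type*} [CommRing R] [IsReduced R] [IsNoetherianRing R]
    {η : Ideal R} (hη : η ∈ minimalPrimes R) :
    ∃ s ∉ η, ∀ x ∈ η, s * x = 0 := by
  classical
  haveI : η.IsPrime := hη.1.1
  obtain ⟨T, hT⟩ := (isNoetherianRing_iff_ideal_fg R).mp ‹_› η
  choose f hf1 hf2 using fun x : T => aux_pointwise hη (by
    rw [← hT]; exact Ideal.subset_span x.2)
  refine ⟨∏ x : T, f x, fun hmem => ?_, fun x hx => ?_⟩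
  · obtain ⟨x, -, hx⟩ := Ideal.IsPrime.prod_mem_iff.mp hmem
    exact hf1 x hx
  · rw [← hT] at hx
    refine Submodule.span_induction (p := fun y _ => (∏ x : T, f x) * y = 0)
      (fun y hy => ?_) (by simp) (fun a b _ _ ha hb => by
        show (∏ x : T, f x) * (a + b) = 0
        rw [mul_add, ha, hb, add_zero])
      (fun r a _ ha => by
        show (∏ x : T, f x) * (r • a) = 0
        rw [smul_eq_mul, mul_left_comm, ha, mul_zero]) hx
    show (∏ x : T, f x) * y = 0
    rw [← Finset.prod_erase_mul _ _ (Finset.mem_univ (⟨y, hy⟩ : T)),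
      mul_assoc]
    have := hf2 ⟨y, hy⟩
    simp only [Subtype.coe_mk] at this
    rw [this, mul_zero]


/-- Let `R` be a reduced Noetherian commutative ring with total ring of fractions `K`,
and let `B, C` be `R`-submodules of `K` with `B·C ⊆ R`.  Consider the generalized
matrix algebra `A = (M₂(R) M₂(B); M₂(C) M₂(R)) ⊆ M₄(K)` and assume the trace form on
`A` is faithful, i.e. the only `x ∈ A` with `Trace(x·y) = 0` for all `y ∈ A` is `x = 0`.
Let `η` be a minimal prime of `R` and `ψ : K → F` a map to a field inducing
`R ↠ R/η ↪ Frac(R/η)` (so that the kernel of `ψ ∘ (R → K)` is `η`).  If the image of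
`C` under `ψ` is zero, then the image of `B` under `ψ` is also zero. -/
theorem gma_image_B_eq_zero_of_image_C_eq_zero
    (R : Type*) [CommRing R] [IsReduced R] [IsNoetherianRing R]
    (K : Type*) [CommRing K] [Algebra R K] [IsFractionRing R K]
    (B C : Submodule R K)
    (hBC : ∀ b ∈ B, ∀ c ∈ C, ∃ r : R, algebraMap R K r = b * c)
    (hfaithful : ∀ x ∈ gmaSet R K B C,
      (∀ y ∈ gmaSet R K B C, Matrix.trace (x * y) = 0) → x = 0)
    (η : Ideal R) (hη : η ∈ minimalPrimes R)
    (F : Type*) [Field F] (ψ : K →+* F)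
    (hker : RingHom.ker (ψ.comp (algebraMap R K)) = η)
    (hC : ∀ c ∈ C, ψ c = 0) :
    ∀ b ∈ B, ψ b = 0 := by
  intro b hb
  obtain ⟨s, hs, hskill⟩ := aux_uniform hη
  set v : K := algebraMap R K s * b with hv
  have hvB : v ∈ B := by
    rw [hv, ← Algebra.smul_def]; exact B.smul_mem s hb
  set x : Matrix (Fin 4) (Fin 4) K := Matrix.single 0 2 v with hx
  have hxmem : x ∈ gmaSet R K B C := by
    intro i j
    refine ⟨fun hi hj => ⟨0, ?_⟩, fun hi hj => ⟨0, ?_⟩, fun hi hj => ?_, fun hi hj => ?_⟩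
    · rw [hx, Matrix.single_apply_of_ne, map_zero]
      rintro ⟨-, rfl⟩; omega
    · rw [hx, Matrix.single_apply_of_ne, map_zero]
      rintro ⟨rfl, -⟩; simp at hi
    · by_cases h : (0 : Fin 4) = i ∧ (2 : Fin 4) = j
      · obtain ⟨rfl, rfl⟩ := h
        rw [hx, Matrix.single_apply_same]; exact hvB
      · rw [hx, Matrix.single_apply_of_ne _ _ _ _ _ h]; exact B.zero_mem
    · rw [hx, Matrix.single_apply_of_ne _ _ _ _ _ (by rintro ⟨rfl, -⟩; simp at hi)]
      exact C.zero_mem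
  have hx0 : x = 0 := by
    refine hfaithful x hxmem (fun y hy => ?_)
    have htr : Matrix.trace (x * y) = v * y 2 0 := by
      rw [Matrix.trace, Fin.sum_univ_four]
      simp only [Matrix.diag_apply, hx]
      rw [Matrix.single_mul_apply_same,
        Matrix.single_mul_apply_of_ne _ _ _ _ _ (by decide) y,
        Matrix.single_mul_apply_of_ne _ _ _ _ _ (by decide) y,
        Matrix.single_mul_apply_of_ne _ _ _ _ _ (by decide) y]
      ring
    rw [htr]
    have hyC : y 2 0 ∈ C := ((hy 2 0).2.2.2 (by norm_num) (by norm_num))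
    obtain ⟨r, hr⟩ := hBC b hb (y 2 0) hyC
    have hrη : r ∈ η := by
      rw [← hker]
      show ψ (algebraMap R K r) = 0
      rw [hr, map_mul, hC _ hyC, mul_zero]
    have : v * y 2 0 = algebraMap R K (s * r) := by
      rw [hv, map_mul, mul_assoc, hr]
    rw [this, hskill r hrη, map_zero]
  have hv0 : v = 0 := by
    have := congrFun (congrFun hx0 0) 2
    rwa [hx, Matrix.single_apply_same] at this
  have : ψ (algebraMap R K s) * ψ b = 0 := by
    rw [← map_mul, ← hv, hv0, map_zero]
  have hsne : ψ (algebraMap R K s) ≠ 0 := by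
    intro h
    exact hs (by rw [← hker]; exact h)
  exact (mul_eq_zero.mp this).resolve_left hsne
end
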